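/- Let V = ℝⁿ with orthonormal basis ε₁,…,ε_n and let Δ = {±ε_i ± ε_j : 1 ≤ i < j ≤ n} ∪ {±ε_i} be the root system of type B_n. Let s be the Weyl group element acting as the positive cycle ε₁ → ε₂ → ε₄ → … → ε_k → ε_{k−1} → … → ε₃ → ε₁ of even length k (2 < k ≤ n) and fixing ε_{k+1},…,ε_n. Then the set of roots fixed by s is Δ ∩ span(ε_{k+1},…,ε_n), which is a root system of type B_{n−k}, and it has 2(n−k)² elements. -/

import Mathlib

/-- The standard basis vector `ε_i` of `ℝⁿ`. -/
def eB (n : ℕ) (i : Fin n) : Fin n → ℝ := Pi.single i 1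

/-- The roots of type `B` supported on a set `I` of indices:
`±ε_i ± ε_j` (`i ≠ j` in `I`) and `±ε_i` (`i ∈ I`). -/
def DeltaB (n : ℕ) (I : Set (Fin n)) : Set (Fin n → ℝ) :=
  {v | (∃ i ∈ I, ∃ j ∈ I, i ≠ j ∧ v = eB n i - eB n j) ∨
       (∃ i ∈ I, ∃ j ∈ I, i < j ∧ (v = eB n i + eB n j ∨ v = -(eB n i + eB n j))) ∨
       (∃ i ∈ I, v = eB n i ∨ v = -(eB n i))}

lemma eB_apply (n : ℕ) (i j : Fin n) : eB n i j = if j = i then 1 else 0 := by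
  simp [eB, Pi.single_apply]

lemma eB_inj {n : ℕ} {i i' : Fin n} (h : eB n i = eB n i') : i = i' := by
  have h1 := congrFun h i
  by_cases hA : i = i'
  · exact hA
  · simp [eB_apply, hA] at h1

lemma eB_sub_inj {n : ℕ} {i j i' j' : Fin n} (hij : i ≠ j) (hij' : i' ≠ j')
    (h : eB n i - eB n j = eB n i' - eB n j') : i = i' ∧ j = j' := by
  have h1 := congrFun h i
  have hA : i = i' := by
    by_cases hA : i = i'
    · exact hA
    · by_cases hB : i = j'
      · subst hB
        simp [eB_apply, hA, hij] at h1
        norm_num at h1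
      · simp [eB_apply, hA, hB, hij] at h1
  refine ⟨hA, eB_inj ?_⟩
  subst hA
  have := sub_right_injective h
  exact this

lemma eB_add_inj {n : ℕ} {i j i' j' : Fin n} (hij : i < j) (hij' : i' < j')
    (h : eB n i + eB n j = eB n i' + eB n j') : i = i' ∧ j = j' := by
  have h1 := congrFun h i'
  have h2 := congrFun h j'
  have h3 := congrFun h i
  have hi' : i' = i ∨ i' = j := by
    by_cases hA : i' = i
    · exact Or.inl hA
    · by_cases hB : i' = j
      · exact Or.inr hB
      · simp [eB_apply, hA, hB, hij'.ne] at h1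
  have hj' : j' = i ∨ j' = j := by
    by_cases hA : j' = i
    · exact Or.inl hA
    · by_cases hB : j' = j
      · exact Or.inr hB
      · simp [eB_apply, hA, hB, hij'.ne'] at h2
  have hi : i = i' ∨ i = j' := by
    by_cases hA : i = i'
    · exact Or.inl hA
    · by_cases hB : i = j'
      · exact Or.inr hB
      · simp [eB_apply, hA, hB, hij.ne] at h3
  rcases hi' with hA | hA <;> rcases hj' with hB | hB <;> rcases hi with hC | hC <;>
    subst_vars <;> first
      | exact ⟨rfl, rfl⟩
      | (exact absurd rfl hij.ne) | (exact absurd rfl hij'.ne)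
      | (exact absurd (hij.trans hij') (lt_irrefl _)) | (exact absurd (hij'.trans hij) (lt_irrefl _))
      | omega

lemma eB_comp {n : ℕ} (σ : Equiv.Perm (Fin n)) (i : Fin n) :
    (fun m => eB n i (σ.symm m)) = eB n (σ i) := by
  funext m
  simp [eB_apply, Equiv.symm_apply_eq]

lemma no_two_cycle {n k : ℕ} (h2 : 2 < k) (hkn : k ≤ n)
    (σ : Equiv.Perm (Fin n)) (hcyc : σ.IsCycle)
    (hfix : ∀ i : Fin n, σ i = i ↔ k ≤ (i : ℕ)) {i : Fin n} (hi : σ i ≠ i) :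
    σ (σ i) ≠ i := by
  intro hcontra
  have hpow : σ ^ 2 = 1 := by
    rw [hcyc.pow_eq_one_iff]
    exact ⟨i, hi, by simpa [pow_succ, pow_zero] using hcontra⟩
  have hdvd : orderOf σ ∣ 2 := orderOf_dvd_of_pow_eq_one hpow
  have hsupp : σ.support = Finset.univ.filter (fun i : Fin n => (i : ℕ) < k) := by
    ext j
    simp only [Equiv.Perm.mem_support, Finset.mem_filter, Finset.mem_univ, true_and, ne_eq, hfix, not_le]
  have hcard : σ.support.card = k := by
    rw [hsupp]
    have : Finset.univ.filter (fun i : Fin n => (i : ℕ) < k)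
        = Finset.map (Fin.castLEEmb hkn) Finset.univ := by
      ext j
      simp only [Finset.mem_filter, Finset.mem_univ, true_and, Finset.mem_map]
      constructor
      · intro hj
        exact ⟨⟨(j : ℕ), hj⟩, by simp [Fin.castLEEmb, Fin.ext_iff]⟩
      · rintro ⟨a, rfl⟩
        simp [Fin.castLEEmb]
    rw [this, Finset.card_map, Finset.card_univ, Fintype.card_fin]
  rw [hcyc.orderOf, hcard] at hdvd
  exact absurd (Nat.le_of_dvd (by norm_num) hdvd) (by omega)

lemma DeltaB_mono {n : ℕ} {I J : Set (Fin n)} (h : I ⊆ J) : DeltaB n I ⊆ DeltaB n J := by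
  rintro v (⟨i, hi, j, hj, hij, rfl⟩ | ⟨i, hi, j, hj, hij, hc⟩ | ⟨i, hi, hc⟩)
  · exact Or.inl ⟨i, h hi, j, h hj, hij, rfl⟩
  · exact Or.inr (Or.inl ⟨i, h hi, j, h hj, hij, hc⟩)
  · exact Or.inr (Or.inr ⟨i, h hi, hc⟩)

lemma fixed_eq {n k : ℕ} (h2 : 2 < k) (hkn : k ≤ n)
    (σ : Equiv.Perm (Fin n)) (hcyc : σ.IsCycle)
    (hfix : ∀ i : Fin n, σ i = i ↔ k ≤ (i : ℕ)) :
    {α ∈ DeltaB n Set.univ | (fun j => α (σ.symm j)) = α}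
      = DeltaB n {i | k ≤ (i : ℕ)} := by
  have key : ∀ (i m : Fin n), eB n i (σ.symm m) = eB n (σ i) m :=
    fun i m => congrFun (eB_comp σ i) m
  ext α
  constructor
  · rintro ⟨hmem, hinv⟩
    rcases hmem with ⟨i, -, j, -, hij, rfl⟩ | ⟨i, -, j, -, hij, hc⟩ | ⟨i, -, hc⟩
    · -- difference
      have heq : eB n (σ i) - eB n (σ j) = eB n i - eB n j := by
        funext m
        have h := congrFun hinv m
        simp only [Pi.sub_apply, key] at h
        simpa [Pi.sub_apply] using h
      obtain ⟨hi, hj⟩ := eB_sub_inj (fun h => hij (σ.injective h)) hij heq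
      exact Or.inl ⟨i, (hfix i).mp hi, j, (hfix j).mp hj, hij, rfl⟩
    · -- sum
      have heq : eB n (σ i) + eB n (σ j) = eB n i + eB n j := by
        rcases hc with rfl | rfl
        · funext m
          have h := congrFun hinv m
          simp only [Pi.add_apply, key] at h
          simpa [Pi.add_apply] using h
        · funext m
          have h := congrFun hinv m
          simp only [Pi.neg_apply, Pi.add_apply, key] at h
          have h' := neg_injective h
          simpa [Pi.add_apply] using h'
      have keyfix : σ i = i ∧ σ j = j := by
        by_cases hlt : σ i < σ j
        · exact (eB_add_inj hlt hij heq).imp id id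
        · have hne : σ i ≠ σ j := fun h => hij.ne (σ.injective h)
          have hlt' : σ j < σ i := lt_of_le_of_ne (not_lt.mp hlt) hne.symm
          obtain ⟨ha, hb⟩ := eB_add_inj hlt' hij (by rw [add_comm]; exact heq)
          exfalso
          have hii : σ i ≠ i := by rw [hb]; exact hij.ne'
          exact no_two_cycle h2 hkn σ hcyc hfix hii (by rw [hb, ha])
      obtain ⟨hi, hj⟩ := keyfix
      exact Or.inr (Or.inl ⟨i, (hfix i).mp hi, j, (hfix j).mp hj, hij, hc⟩)
    · -- single
      have hi : σ i = i := by
        apply eB_inj (n := n) (i := σ i) (i' := i)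
        rcases hc with rfl | rfl
        · funext m
          have h := congrFun hinv m
          simpa only [key] using h
        · funext m
          have h := congrFun hinv m
          simp only [Pi.neg_apply, key] at h
          exact neg_injective h
      exact Or.inr (Or.inr ⟨i, (hfix i).mp hi, hc⟩)
  · intro hmem
    refine ⟨DeltaB_mono (fun _ _ => trivial) hmem, ?_⟩
    rcases hmem with ⟨i, hi, j, hj, hij, rfl⟩ | ⟨i, hi, j, hj, hij, hc⟩ | ⟨i, hi, hc⟩
    · have h1 : σ i = i := (hfix i).mpr hi
      have h2' : σ j = j := (hfix j).mpr hj
      funext m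
      simp only [Pi.sub_apply, key, h1, h2']
    · have h1 : σ i = i := (hfix i).mpr hi
      have h2' : σ j = j := (hfix j).mpr hj
      rcases hc with rfl | rfl <;> funext m <;>
        simp only [Pi.add_apply, Pi.neg_apply, key, h1, h2']
    · have h1 : σ i = i := (hfix i).mpr hi
      rcases hc with rfl | rfl <;> funext m <;>
        simp only [Pi.neg_apply, key, h1]

lemma span_char {n k : ℕ} (v : Fin n → ℝ) :
    v ∈ Submodule.span ℝ (eB n '' {i : Fin n | k ≤ (i : ℕ)}) ↔
      ∀ i : Fin n, (i : ℕ) < k → v i = 0 := by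
  constructor
  · intro hv
    induction hv using Submodule.span_induction with
    | mem x hx =>
      obtain ⟨i, hi, rfl⟩ := hx
      intro m hm
      simp only [Set.mem_setOf_eq] at hi
      have hmi : m ≠ i := by
        intro h; subst h; omega
      simp [eB_apply, hmi]
    | zero => intro m hm; rfl
    | add x y hx hy ihx ihy => intro m hm; simp [ihx m hm, ihy m hm]
    | smul c x hx ihx => intro m hm; simp [ihx m hm]
  · intro hv
    have hrep : v = ∑ i : Fin n, v i • eB n i := by
      conv_lhs => rw [pi_eq_sum_univ v]
      refine Finset.sum_congr rfl fun i _ => ?_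
      congr 1
      funext j
      rw [eB_apply]
      simp [eq_comm]
    rw [hrep]
    apply Submodule.sum_mem
    intro i _
    by_cases hi : k ≤ (i : ℕ)
    · exact Submodule.smul_mem _ _ (Submodule.subset_span ⟨i, hi, rfl⟩)
    · rw [hv i (by omega)]
      simp

lemma part2_eq {n k : ℕ} :
    DeltaB n {i : Fin n | k ≤ (i : ℕ)} = DeltaB n Set.univ ∩
      (Submodule.span ℝ (eB n '' {i : Fin n | k ≤ (i : ℕ)}) : Set (Fin n → ℝ)) := by
  ext v
  constructor
  · intro hmem
    refine ⟨DeltaB_mono (fun _ _ => trivial) hmem, ?_⟩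
    rw [SetLike.mem_coe, span_char]
    rcases hmem with ⟨i, hi, j, hj, hij, rfl⟩ | ⟨i, hi, j, hj, hij, hc⟩ | ⟨i, hi, hc⟩ <;>
      [skip; rcases hc with rfl | rfl; rcases hc with rfl | rfl] <;>
    · intro m hm
      simp only [Set.mem_setOf_eq] at hi
      first
      | (simp only [Set.mem_setOf_eq] at hj
         have hmi : m ≠ i := by intro h; subst h; omega
         have hmj : m ≠ j := by intro h; subst h; omega
         simp [eB_apply, hmi, hmj])
      | (have hmi : m ≠ i := by intro h; subst h; omega
         simp [eB_apply, hmi])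
  · rintro ⟨hU, hs⟩
    rw [SetLike.mem_coe, span_char] at hs
    rcases hU with ⟨i, -, j, -, hij, rfl⟩ | ⟨i, -, j, -, hij, hc⟩ | ⟨i, -, hc⟩
    · have hki : k ≤ (i : ℕ) := by
        by_contra hik
        have := hs i (by omega)
        simp [eB_apply, hij] at this
      have hkj : k ≤ (j : ℕ) := by
        by_contra hjk
        have := hs j (by omega)
        simp [eB_apply, hij.symm] at this
      exact Or.inl ⟨i, hki, j, hkj, hij, rfl⟩
    · have hij' : i ≠ j := hij.ne
      have hki : k ≤ (i : ℕ) := by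
        by_contra hik
        have := hs i (by omega)
        rcases hc with rfl | rfl <;> simp [eB_apply, hij', hij'.symm] at this
      have hkj : k ≤ (j : ℕ) := by
        by_contra hjk
        have := hs j (by omega)
        rcases hc with rfl | rfl <;> simp [eB_apply, hij', hij'.symm] at this
      exact Or.inr (Or.inl ⟨i, hki, j, hkj, hij, hc⟩)
    · have hki : k ≤ (i : ℕ) := by
        by_contra hik
        have := hs i (by omega)
        rcases hc with rfl | rfl <;> simp [eB_apply] at this
      exact Or.inr (Or.inr ⟨i, hki, hc⟩)

lemma L_eB {n : ℕ} (i : Fin n) : ∑ m, eB n i m = 1 := by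
  simp [eB_apply]

lemma card_T {n k : ℕ} (hkn : k ≤ n) :
    (Finset.univ.filter fun i : Fin n => k ≤ (i : ℕ)).card = n - k := by
  have h1 : (Finset.univ.filter fun i : Fin n => ¬ k ≤ (i : ℕ)).card = k := by
    have : (Finset.univ.filter fun i : Fin n => ¬ k ≤ (i : ℕ))
        = Finset.map (Fin.castLEEmb hkn) Finset.univ := by
      ext j
      simp only [Finset.mem_filter, Finset.mem_univ, true_and, Finset.mem_map, not_le]
      constructor
      · intro hj
        exact ⟨⟨(j : ℕ), hj⟩, by simp [Fin.castLEEmb, Fin.ext_iff]⟩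
      · rintro ⟨a, rfl⟩
        simp [Fin.castLEEmb]
    rw [this, Finset.card_map, Finset.card_univ, Fintype.card_fin]
  have h2 := Finset.card_filter_add_card_filter_not
    (s := (Finset.univ : Finset (Fin n))) (p := fun i : Fin n => k ≤ (i : ℕ))
  simp only [Finset.card_univ, Fintype.card_fin] at h2
  omega

lemma card_DeltaB {n k : ℕ} (hkn : k ≤ n) :
    (DeltaB n {i : Fin n | k ≤ (i : ℕ)}).ncard = 2 * (n - k) ^ 2 := by
  classical
  set T : Finset (Fin n) := Finset.univ.filter (fun i : Fin n => k ≤ (i : ℕ)) with hT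
  have hTmem : ∀ i : Fin n, i ∈ T ↔ k ≤ (i : ℕ) := by
    intro i; simp [hT]
  have hTcard : T.card = n - k := card_T hkn
  set F1 : Finset (Fin n → ℝ) := T.offDiag.image (fun p => eB n p.1 - eB n p.2) with hF1
  set F23 : Finset (Fin n → ℝ) := T.offDiag.image
    (fun p => if p.1 < p.2 then eB n p.1 + eB n p.2 else -(eB n p.1 + eB n p.2)) with hF23
  set F4 : Finset (Fin n → ℝ) := T.image (eB n) with hF4
  set F5 : Finset (Fin n → ℝ) := T.image (fun i => -eB n i) with hF5
  -- the set equals the finset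
  have hset : DeltaB n {i : Fin n | k ≤ (i : ℕ)} = ↑(F1 ∪ F23 ∪ F4 ∪ F5) := by
    ext v
    simp only [Finset.coe_union, Set.mem_union, Finset.mem_coe]
    constructor
    · rintro (⟨i, hi, j, hj, hij, rfl⟩ | ⟨i, hi, j, hj, hij, hc⟩ | ⟨i, hi, hc⟩)
      · exact Or.inl (Or.inl (Or.inl (Finset.mem_image.mpr
          ⟨(i, j), Finset.mem_offDiag.mpr ⟨(hTmem i).mpr hi, (hTmem j).mpr hj, hij⟩, rfl⟩)))
      · refine Or.inl (Or.inl (Or.inr (Finset.mem_image.mpr ?_)))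
        rcases hc with rfl | rfl
        · exact ⟨(i, j), Finset.mem_offDiag.mpr ⟨(hTmem i).mpr hi, (hTmem j).mpr hj, hij.ne⟩,
            by simp [hij]⟩
        · refine ⟨(j, i), Finset.mem_offDiag.mpr ⟨(hTmem j).mpr hj, (hTmem i).mpr hi, hij.ne'⟩, ?_⟩
          simp [not_lt.mpr hij.le, add_comm]
      · rcases hc with rfl | rfl
        · exact Or.inl (Or.inr (Finset.mem_image.mpr ⟨i, (hTmem i).mpr hi, rfl⟩))
        · exact Or.inr (Finset.mem_image.mpr ⟨i, (hTmem i).mpr hi, rfl⟩)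
    · rintro ((( h | h) | h) | h) <;> rw [Finset.mem_image] at h
      · obtain ⟨⟨i, j⟩, hp, rfl⟩ := h
        obtain ⟨hi, hj, hij⟩ := Finset.mem_offDiag.mp hp
        exact Or.inl ⟨i, (hTmem i).mp hi, j, (hTmem j).mp hj, hij, rfl⟩
      · obtain ⟨⟨i, j⟩, hp, rfl⟩ := h
        obtain ⟨hi, hj, hij⟩ := Finset.mem_offDiag.mp hp
        by_cases hlt : i < j
        · exact Or.inr (Or.inl ⟨i, (hTmem i).mp hi, j, (hTmem j).mp hj, hlt, Or.inl (by simp [hlt])⟩)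
        · have hlt' : j < i := lt_of_le_of_ne (not_lt.mp hlt) (Ne.symm hij)
          refine Or.inr (Or.inl ⟨j, (hTmem j).mp hj, i, (hTmem i).mp hi, hlt', Or.inr ?_⟩)
          simp [hlt, add_comm]
      · obtain ⟨i, hi, rfl⟩ := h
        exact Or.inr (Or.inr ⟨i, (hTmem i).mp hi, Or.inl rfl⟩)
      · obtain ⟨i, hi, rfl⟩ := h
        exact Or.inr (Or.inr ⟨i, (hTmem i).mp hi, Or.inr rfl⟩)
  -- linear functional: sum of coordinates
  have hLsub : ∀ i j : Fin n, ∑ m, (eB n i - eB n j) m = 0 := by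
    intro i j
    simp only [Pi.sub_apply, Finset.sum_sub_distrib, L_eB, sub_self]
  have hLadd : ∀ i j : Fin n, ∑ m, (eB n i + eB n j) m = 2 := by
    intro i j
    simp only [Pi.add_apply, Finset.sum_add_distrib, L_eB]
    norm_num
  have hLnegadd : ∀ i j : Fin n, ∑ m, (-(eB n i + eB n j)) m = -2 := by
    intro i j
    simp only [Pi.neg_apply, Finset.sum_neg_distrib, hLadd]
  have hLneg : ∀ i : Fin n, ∑ m, (-eB n i) m = -1 := by
    intro i
    simp only [Pi.neg_apply, Finset.sum_neg_distrib, L_eB]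
  have hL1 : ∀ v ∈ F1, ∑ m, v m = 0 := by
    intro v hv
    obtain ⟨⟨i, j⟩, hp, rfl⟩ := Finset.mem_image.mp hv
    exact hLsub i j
  have hL23 : ∀ v ∈ F23, ∑ m, v m = 2 ∨ ∑ m, v m = -2 := by
    intro v hv
    obtain ⟨⟨i, j⟩, hp, rfl⟩ := Finset.mem_image.mp hv
    by_cases hlt : i < j
    · simp only [hlt, if_true]
      exact Or.inl (hLadd i j)
    · simp only [hlt, if_false]
      exact Or.inr (hLnegadd i j)
  have hL4 : ∀ v ∈ F4, ∑ m, v m = 1 := by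
    intro v hv
    obtain ⟨i, hi, rfl⟩ := Finset.mem_image.mp hv
    exact L_eB i
  have hL5 : ∀ v ∈ F5, ∑ m, v m = -1 := by
    intro v hv
    obtain ⟨i, hi, rfl⟩ := Finset.mem_image.mp hv
    exact hLneg i
  -- disjointness
  have d12 : Disjoint F1 F23 := Finset.disjoint_left.mpr (by
    intro v h1 h2
    rcases hL23 v h2 with h | h <;> rw [hL1 v h1] at h <;> norm_num at h)
  have d14 : Disjoint F1 F4 := Finset.disjoint_left.mpr (by
    intro v h1 h2
    have := hL4 v h2; rw [hL1 v h1] at this; norm_num at this)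
  have d24 : Disjoint F23 F4 := Finset.disjoint_left.mpr (by
    intro v h1 h2
    have := hL4 v h2
    rcases hL23 v h1 with h | h <;> rw [this] at h <;> norm_num at h)
  have d15 : Disjoint F1 F5 := Finset.disjoint_left.mpr (by
    intro v h1 h2
    have := hL5 v h2; rw [hL1 v h1] at this; norm_num at this)
  have d25 : Disjoint F23 F5 := Finset.disjoint_left.mpr (by
    intro v h1 h2
    have := hL5 v h2
    rcases hL23 v h1 with h | h <;> rw [this] at h <;> norm_num at h)
  have d45 : Disjoint F4 F5 := Finset.disjoint_left.mpr (by
    intro v h1 h2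
    have := hL5 v h2; rw [hL4 v h1] at this; norm_num at this)
  -- cardinalities
  have c1 : F1.card = T.offDiag.card := by
    apply Finset.card_image_of_injOn
    rintro ⟨i, j⟩ hp ⟨i', j'⟩ hq he
    obtain ⟨-, -, hij⟩ := Finset.mem_offDiag.mp hp
    obtain ⟨-, -, hij'⟩ := Finset.mem_offDiag.mp hq
    obtain ⟨h1, h2⟩ := eB_sub_inj hij hij' he
    exact Prod.ext h1 h2
  have c23 : F23.card = T.offDiag.card := by
    apply Finset.card_image_of_injOn
    rintro ⟨i, j⟩ hp ⟨i', j'⟩ hq he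
    obtain ⟨-, -, hij⟩ := Finset.mem_offDiag.mp hp
    obtain ⟨-, -, hij'⟩ := Finset.mem_offDiag.mp hq
    by_cases h : i < j <;> by_cases h' : i' < j' <;> simp only [h, h', if_true, if_false] at he
    · obtain ⟨h1, h2⟩ := eB_add_inj h h' he
      exact Prod.ext h1 h2
    · exfalso
      have := congrArg (fun v : Fin n → ℝ => ∑ m, v m) he
      simp only [hLadd, hLnegadd] at this
      norm_num at this
    · exfalso
      have := congrArg (fun v : Fin n → ℝ => ∑ m, v m) he
      simp only [hLadd, hLnegadd] at this
      norm_num at this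
    · have hji : j < i := lt_of_le_of_ne (not_lt.mp h) (Ne.symm hij)
      have hji' : j' < i' := lt_of_le_of_ne (not_lt.mp h') (Ne.symm hij')
      have he' := neg_injective he
      have he'' : eB n j + eB n i = eB n j' + eB n i' := by
        rw [add_comm, add_comm (eB n j')]; exact he'
      obtain ⟨h1, h2⟩ := eB_add_inj hji hji' he''
      exact Prod.ext h2 h1
  have c4 : F4.card = T.card := by
    apply Finset.card_image_of_injOn
    intro i _ j _ h
    exact eB_inj h
  have c5 : F5.card = T.card := by
    apply Finset.card_image_of_injOn
    intro i _ j _ h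
    exact eB_inj (neg_injective h)
  -- put it together
  rw [hset, Set.ncard_coe_finset]
  rw [Finset.card_union_of_disjoint (by
      rw [Finset.disjoint_union_left, Finset.disjoint_union_left]
      exact ⟨⟨d15, d25⟩, d45⟩),
    Finset.card_union_of_disjoint (by
      rw [Finset.disjoint_union_left]
      exact ⟨d14, d24⟩),
    Finset.card_union_of_disjoint d12]
  rw [c1, c23, c4, c5, Finset.offDiag_card, hTcard]
  rcases Nat.eq_zero_or_pos (n - k) with h | h
  · simp [h]
  · obtain ⟨m, hm⟩ := Nat.exists_eq_succ_of_ne_zero (Nat.pos_iff_ne_zero.mp h)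
    rw [hm]
    have : (m + 1) * (m + 1) - (m + 1) = (m + 1) * m := by
      rw [Nat.mul_succ, Nat.add_sub_cancel]
    rw [Nat.succ_eq_add_one, this]
    ring

theorem stmt8 (n k : ℕ) (hke : Even k) (h2 : 2 < k) (hkn : k ≤ n)
    (σ : Equiv.Perm (Fin n)) (hcyc : σ.IsCycle)
    (hfix : ∀ i : Fin n, σ i = i ↔ k ≤ (i : ℕ)) :
    ({α ∈ DeltaB n Set.univ | (fun j => α (σ.symm j)) = α}
        = DeltaB n {i | k ≤ (i : ℕ)}) ∧
    ({α ∈ DeltaB n Set.univ | (fun j => α (σ.symm j)) = α}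
        = DeltaB n Set.univ ∩
            (Submodule.span ℝ (eB n '' {i | k ≤ (i : ℕ)}) : Set (Fin n → ℝ))) ∧
    {α ∈ DeltaB n Set.univ | (fun j => α (σ.symm j)) = α}.ncard
        = 2 * (n - k) ^ 2 := by
  have hA := fixed_eq h2 hkn σ hcyc hfix
  refine ⟨hA, ?_, ?_⟩
  · rw [hA, ← part2_eq]
  · rw [hA]
    exact card_DeltaB hkn
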